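/- The vector |ε⟩ = r^{n(n−1)/2}·Σ_{σ∈Sₙ} (−r)^{−ℓ(σ)} e^{σ(1)}⊗⋯⊗e^{σ(n)} satisfies P⁺_{k,k+1}|ε⟩ = 0 for all k = 1,…,n−1, where P⁺ = (R̂ + r)/(r+s). -/

import Mathlib

open Matrix

noncomputable def Rmat (n : ℕ) (r s : ℂ) :
    Matrix (Fin n × Fin n) (Fin n × Fin n) ℂ := fun p q =>
  (if q = p then (if p.1 = p.2 then s else if p.2 < p.1 then r * s else 1) else 0)
    + (if q = (p.2, p.1) ∧ p.2 < p.1 then s - r else 0)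

noncomputable def Pflip (n : ℕ) : Matrix (Fin n × Fin n) (Fin n × Fin n) ℂ :=
  fun p q => if p.1 = q.2 ∧ p.2 = q.1 then 1 else 0

noncomputable def Rhat (n : ℕ) (r s : ℂ) :
    Matrix (Fin n × Fin n) (Fin n × Fin n) ℂ := Pflip n * Rmat n r s

/-- `P⁺ = (R̂ + r)/(r + s)`. -/
noncomputable def Pplus (n : ℕ) (r s : ℂ) :
    Matrix (Fin n × Fin n) (Fin n × Fin n) ℂ :=
  (r + s)⁻¹ • (Rhat n r s + r • (1 : Matrix (Fin n × Fin n) (Fin n × Fin n) ℂ))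

/-- The length (number of inversions) of a permutation of `Fin n`. -/
def invNum {n : ℕ} (σ : Equiv.Perm (Fin n)) : ℕ :=
  (Finset.univ.filter fun p : Fin n × Fin n => p.1 < p.2 ∧ σ p.2 < σ p.1).card

/-- The two-parameter factorial `[n]_{r,s}! = Π_{k=1}^n (s^k - r^k)/(s - r)`. -/
noncomputable def qfact (n : ℕ) (r s : ℂ) : ℂ :=
  ∏ k ∈ Finset.range n, (s ^ (k + 1) - r ^ (k + 1)) / (s - r)

/-- The antisymmetric vector
`|ε⟩ = r^{n(n-1)/2} Σ_{σ∈Sₙ} (-r)^{-ℓ(σ)} e^{σ(1)} ⊗ ⋯ ⊗ e^{σ(n)}`,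
as a function on multi-indices `Fin n → Fin n` of `V^{⊗n}`. -/
noncomputable def epsVec (n : ℕ) (r s : ℂ) : (Fin n → Fin n) → ℂ := fun f =>
  r ^ (n * (n - 1) / 2) *
    ∑ σ : Equiv.Perm (Fin n), if f = ⇑σ then ((-r) ^ invNum σ)⁻¹ else 0

/-- A matrix `A` on `V ⊗ V` acting at tensor positions `(k, k+1)` of `V^{⊗n}`. -/
noncomputable def liftAt (n k : ℕ) (hk : k + 1 < n)
    (A : Matrix (Fin n × Fin n) (Fin n × Fin n) ℂ) :
    Matrix (Fin n → Fin n) (Fin n → Fin n) ℂ := fun f g =>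
  A (f ⟨k, Nat.lt_of_succ_lt hk⟩, f ⟨k + 1, hk⟩)
      (g ⟨k, Nat.lt_of_succ_lt hk⟩, g ⟨k + 1, hk⟩) *
    ∏ p : Fin n,
      if p = ⟨k, Nat.lt_of_succ_lt hk⟩ ∨ p = ⟨k + 1, hk⟩ then 1
      else if f p = g p then 1 else 0

-- Rhat entries
lemma Rhat_apply (n : ℕ) (r s : ℂ) (p q : Fin n × Fin n) :
    Rhat n r s p q = Rmat n r s (p.2, p.1) q := by
  unfold Rhat; rw [Matrix.mul_apply]; unfold Pflip
  rw [Finset.sum_eq_single ((p.2, p.1) : Fin n × Fin n)]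
  · simp
  · intro m _ hm
    rw [if_neg, zero_mul]
    rintro ⟨h1, h2⟩
    exact hm (Prod.ext h2.symm h1.symm)
  · simp

lemma Pplus_eq_zero (n : ℕ) (r s : ℂ) (p q : Fin n × Fin n)
    (h1 : q ≠ p) (h2 : q ≠ (p.2, p.1)) : Pplus n r s p q = 0 := by
  unfold Pplus
  simp only [Matrix.smul_apply, Matrix.add_apply, Rhat_apply, Matrix.one_apply, smul_eq_mul]
  unfold Rmat
  rw [if_neg h2, if_neg, if_neg]
  · ring
  · exact fun h => h1 h.symm
  · rintro ⟨h, -⟩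
    exact h1 (h.trans (Prod.mk.eta))

lemma Pplus_diag_lt (n : ℕ) (r s : ℂ) (a b : Fin n) (hab : a < b) :
    Pplus n r s (a, b) (a, b) = (r + s)⁻¹ * s := by
  unfold Pplus
  simp only [Matrix.smul_apply, Matrix.add_apply, Rhat_apply, Matrix.one_apply, smul_eq_mul]
  unfold Rmat
  simp only [Prod.ext_iff]
  simp [hab, ne_of_lt hab, (ne_of_lt hab).symm, lt_asymm hab]

lemma Pplus_diag_gt (n : ℕ) (r s : ℂ) (a b : Fin n) (hab : b < a) :
    Pplus n r s (a, b) (a, b) = (r + s)⁻¹ * r := by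
  unfold Pplus
  simp only [Matrix.smul_apply, Matrix.add_apply, Rhat_apply, Matrix.one_apply, smul_eq_mul]
  unfold Rmat
  simp only [Prod.ext_iff]
  simp [hab, ne_of_lt hab, (ne_of_lt hab).symm, lt_asymm hab]

lemma Pplus_off_lt (n : ℕ) (r s : ℂ) (a b : Fin n) (hab : a < b) :
    Pplus n r s (a, b) (b, a) = (r + s)⁻¹ * (r * s) := by
  unfold Pplus
  simp only [Matrix.smul_apply, Matrix.add_apply, Rhat_apply, Matrix.one_apply, smul_eq_mul]
  unfold Rmat
  simp only [Prod.ext_iff]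
  simp [hab, ne_of_lt hab, (ne_of_lt hab).symm, lt_asymm hab]

lemma Pplus_off_gt (n : ℕ) (r s : ℂ) (a b : Fin n) (hab : b < a) :
    Pplus n r s (a, b) (b, a) = (r + s)⁻¹ := by
  unfold Pplus
  simp only [Matrix.smul_apply, Matrix.add_apply, Rhat_apply, Matrix.one_apply, smul_eq_mul]
  unfold Rmat
  simp only [Prod.ext_iff]
  simp [hab, ne_of_lt hab, (ne_of_lt hab).symm, lt_asymm hab]

-- eps lemmas
lemma epsVec_perm (n : ℕ) (r s : ℂ) (σ : Equiv.Perm (Fin n)) :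
    epsVec n r s ⇑σ = r ^ (n * (n - 1) / 2) * ((-r) ^ invNum σ)⁻¹ := by
  unfold epsVec
  congr 1
  rw [Finset.sum_eq_single σ]
  · simp
  · intro τ _ hτ
    rw [if_neg]
    intro hc
    exact hτ (Equiv.coe_fn_injective hc.symm)
  · simp

lemma epsVec_not_inj (n : ℕ) (r s : ℂ) (f : Fin n → Fin n)
    (hf : ¬ Function.Injective f) : epsVec n r s f = 0 := by
  unfold epsVec
  rw [Finset.sum_eq_zero, mul_zero]
  intro σ _
  rw [if_neg]
  rintro rfl
  exact hf σ.injective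

lemma liftAt_apply (n k : ℕ) (hk : k + 1 < n)
    (A : Matrix (Fin n × Fin n) (Fin n × Fin n) ℂ) (f g : Fin n → Fin n) :
    liftAt n k hk A f g =
      A (f ⟨k, Nat.lt_of_succ_lt hk⟩, f ⟨k + 1, hk⟩)
          (g ⟨k, Nat.lt_of_succ_lt hk⟩, g ⟨k + 1, hk⟩) *
        (if ∀ p : Fin n, p ≠ ⟨k, Nat.lt_of_succ_lt hk⟩ → p ≠ ⟨k + 1, hk⟩ → f p = g p
          then 1 else 0) := by
  unfold liftAt
  congr 1
  by_cases h : ∀ p : Fin n, p ≠ ⟨k, Nat.lt_of_succ_lt hk⟩ → p ≠ ⟨k + 1, hk⟩ → f p = g p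
  · rw [if_pos h]
    apply Finset.prod_eq_one
    intro p _
    by_cases h1 : p = ⟨k, Nat.lt_of_succ_lt hk⟩ ∨ p = ⟨k + 1, hk⟩
    · rw [if_pos h1]
    · push_neg at h1
      rw [if_neg (by tauto), if_pos (h p h1.1 h1.2)]
  · rw [if_neg h]
    push_neg at h
    obtain ⟨p, hp1, hp2, hp3⟩ := h
    apply Finset.prod_eq_zero (Finset.mem_univ p)
    rw [if_neg (by tauto), if_neg hp3]

lemma swap_adj_lt {n : ℕ} {i j p q : Fin n} (hij : (i:ℕ)+1 = (j:ℕ))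
    (hpq : p < q) (h : ¬(p = i ∧ q = j)) :
    Equiv.swap i j p < Equiv.swap i j q := by
  rw [not_and_or] at h
  simp only [Equiv.swap_apply_def]
  simp only [Fin.lt_def, Fin.ext_iff] at *
  split_ifs <;> simp_all [Fin.ext_iff] <;> omega

lemma invNum_mul_swap {n : ℕ} (σ : Equiv.Perm (Fin n)) {i j : Fin n}
    (hij : (i:ℕ)+1 = (j:ℕ)) (h : σ i < σ j) :
    invNum (σ * Equiv.swap i j) = invNum σ + 1 := by
  classical
  set τ := Equiv.swap i j with hτ
  have hji : τ i = j := Equiv.swap_apply_left i j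
  have hij2 : τ j = i := Equiv.swap_apply_right i j
  have hlt : i < j := by rw [Fin.lt_def]; omega
  have hinj : Function.Injective (fun p : Fin n × Fin n => ((τ p.1, τ p.2) : Fin n × Fin n)) := by
    intro p q hpq
    have h1 := congrArg Prod.fst hpq
    have h2 := congrArg Prod.snd hpq
    exact Prod.ext (τ.injective h1) (τ.injective h2)
  have hS' : (Finset.univ.filter fun p : Fin n × Fin n => p.1 < p.2 ∧ (σ*τ) p.2 < (σ*τ) p.1)
      = insert (i,j) ((Finset.univ.filter fun p : Fin n × Fin n => p.1 < p.2 ∧ σ p.2 < σ p.1).image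
        fun p => (τ p.1, τ p.2)) := by
    ext p
    simp only [Finset.mem_insert, Finset.mem_image, Finset.mem_filter, Finset.mem_univ, true_and]
    simp only [Equiv.Perm.mul_apply]
    constructor
    · rintro ⟨h1, h2⟩
      by_cases hp : p = (i,j)
      · exact Or.inl hp
      · refine Or.inr ⟨(τ p.1, τ p.2), ⟨?_, ?_⟩, ?_⟩
        · exact swap_adj_lt hij h1 (by rintro ⟨e1, e2⟩; exact hp (Prod.ext e1 e2))
        · exact h2
        · simp [hτ, Equiv.swap_apply_self]
    · rintro (rfl | ⟨q, ⟨hq1, hq2⟩, rfl⟩)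
      · refine ⟨hlt, ?_⟩
        simpa [hji, hij2] using h
      · refine ⟨?_, ?_⟩
        · apply swap_adj_lt hij hq1
          rintro ⟨e1, e2⟩
          rw [e1, e2] at hq2
          exact absurd hq2 (not_lt.2 (le_of_lt h))
        · simpa [hτ, Equiv.swap_apply_self] using hq2
  have hnm : (i,j) ∉ ((Finset.univ.filter fun p : Fin n × Fin n => p.1 < p.2 ∧ σ p.2 < σ p.1).image
        fun p => (τ p.1, τ p.2)) := by
    intro hmem
    obtain ⟨q, hq, he⟩ := Finset.mem_image.1 hmem
    have e1 : τ q.1 = i := congrArg Prod.fst he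
    have e2 : τ q.2 = j := congrArg Prod.snd he
    have f1 : q.1 = j := by have := congrArg τ e1; simpa [hτ, Equiv.swap_apply_self] using this
    have f2 : q.2 = i := by have := congrArg τ e2; simpa [hτ, Equiv.swap_apply_self] using this
    have hq1 := (Finset.mem_filter.1 hq).2.1
    rw [f1, f2] at hq1
    exact absurd hlt (not_lt.2 (le_of_lt hq1))
  show (Finset.univ.filter fun p : Fin n × Fin n => p.1 < p.2 ∧ (σ*τ) p.2 < (σ*τ) p.1).card = _
  rw [hS', Finset.card_insert_of_notMem hnm, Finset.card_image_of_injective _ hinj]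
  rfl


lemma invNum_mul_swap' {n : ℕ} (σ : Equiv.Perm (Fin n)) {i j : Fin n}
    (hij : (i:ℕ)+1 = (j:ℕ)) (h : σ j < σ i) :
    invNum σ = invNum (σ * Equiv.swap i j) + 1 := by
  have h2 : (σ * Equiv.swap i j) i < (σ * Equiv.swap i j) j := by
    simpa [Equiv.Perm.mul_apply] using h
  have := invNum_mul_swap (σ * Equiv.swap i j) hij h2
  rwa [mul_assoc, Equiv.swap_mul_self, mul_one] at this


/-- the vector `|ε⟩` satisfies `P⁺_{k,k+1} |ε⟩ = 0` for all
`k = 1, …, n-1` (0-based: `k + 1 < n`). -/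
theorem stmt7 (n : ℕ) (r s : ℂ) (hr : r ≠ 0) (hs : s ≠ 0) (hrs : r + s ≠ 0)
    (k : ℕ) (hk : k + 1 < n) :
    Matrix.mulVec (liftAt n k hk (Pplus n r s)) (epsVec n r s) = 0 := by
  classical
  funext f
  show ∑ g : Fin n → Fin n, liftAt n k hk (Pplus n r s) f g * epsVec n r s g = 0
  simp only [liftAt_apply]
  set k' : Fin n := ⟨k, Nat.lt_of_succ_lt hk⟩ with hk'def
  set k1 : Fin n := ⟨k + 1, hk⟩ with hk1def
  have hne : k' ≠ k1 := by simp [hk'def, hk1def, Fin.ext_iff]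
  by_cases hab : f k' = f k1
  · apply Finset.sum_eq_zero
    intro g _
    by_cases hoff : ∀ p : Fin n, p ≠ k' → p ≠ k1 → f p = g p
    · rw [if_pos hoff, mul_one]
      by_cases hgp : ((g k', g k1) : Fin n × Fin n) = (f k', f k1)
      · have hgf : g = f := by
          funext p
          by_cases h1 : p = k'
          · subst h1; exact congrArg Prod.fst hgp
          · by_cases h2 : p = k1
            · subst h2; exact congrArg Prod.snd hgp
            · exact (hoff p h1 h2).symm
        rw [hgf, epsVec_not_inj n r s f (fun hinj => hne (hinj hab)), mul_zero]
      · rw [Pplus_eq_zero n r s _ _ hgp (by simpa [← hab] using hgp), zero_mul]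
    · rw [if_neg hoff, mul_zero, zero_mul]
  · set τ := Equiv.swap k' k1 with hτdef
    set g2 : Fin n → Fin n := fun p => f (τ p) with hg2
    have hg2k' : g2 k' = f k1 := by simp only [hg2, hτdef, Equiv.swap_apply_left]
    have hg2k1 : g2 k1 = f k' := by simp only [hg2, hτdef, Equiv.swap_apply_right]
    have hfg2 : f ≠ g2 := by
      intro h
      apply hab
      have := congrFun h k'
      rw [hg2k'] at this
      exact this
    have hzero : ∀ g ∈ (Finset.univ : Finset (Fin n → Fin n)),
        g ∉ ({f, g2} : Finset (Fin n → Fin n)) →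
        (Pplus n r s (f k', f k1) (g k', g k1) *
          if ∀ p : Fin n, p ≠ k' → p ≠ k1 → f p = g p then 1 else 0) * epsVec n r s g = 0 := by
      intro g _ hg
      simp only [Finset.mem_insert, Finset.mem_singleton, not_or] at hg
      by_cases hoff : ∀ p : Fin n, p ≠ k' → p ≠ k1 → f p = g p
      · rw [if_pos hoff, mul_one]
        have hq1 : ((g k', g k1) : Fin n × Fin n) ≠ (f k', f k1) := by
          intro hgp
          apply hg.1
          funext p
          by_cases h1 : p = k'
          · subst h1; exact congrArg Prod.fst hgp
          · by_cases h2 : p = k1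
            · subst h2; exact congrArg Prod.snd hgp
            · exact ((hoff p h1 h2)).symm
        have hq2 : ((g k', g k1) : Fin n × Fin n) ≠ (f k1, f k') := by
          intro hgp
          apply hg.2
          funext p
          by_cases h1 : p = k'
          · subst h1; rw [hg2k']; exact congrArg Prod.fst hgp
          · by_cases h2 : p = k1
            · subst h2; rw [hg2k1]; exact congrArg Prod.snd hgp
            · rw [show g2 p = f p from by
                simp only [hg2, hτdef, Equiv.swap_apply_of_ne_of_ne h1 h2]]
              exact (hoff p h1 h2).symm
        rw [Pplus_eq_zero n r s _ _ hq1 hq2, zero_mul]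
      · rw [if_neg hoff, mul_zero, zero_mul]
    rw [← Finset.sum_subset (Finset.subset_univ ({f, g2} : Finset (Fin n → Fin n))) hzero,
      Finset.sum_pair hfg2]
    rw [if_pos (fun p _ _ => rfl), mul_one]
    rw [if_pos (fun p h1 h2 =>
      (by simp only [hg2, hτdef, Equiv.swap_apply_of_ne_of_ne h1 h2] :
        f p = g2 p)), mul_one]
    rw [hg2k', hg2k1]
    by_cases hinj : Function.Injective f
    · have hbij : Function.Bijective f := Finite.injective_iff_bijective.1 hinj
      set σ : Equiv.Perm (Fin n) := Equiv.ofBijective f hbij with hσdef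
      have hfσ : f = ⇑σ := rfl
      have hg2σ : g2 = ⇑(σ * τ) := by
        funext p
        simp only [hg2, Equiv.Perm.mul_apply]
        rfl
      have hadj : (k' : ℕ) + 1 = (k1 : ℕ) := rfl
      have hnr : (-r : ℂ) ≠ 0 := neg_ne_zero.2 hr
      rcases lt_or_gt_of_ne hab with hlt | hgt
      · have hσlt : σ k' < σ k1 := hlt
        have hinv : invNum (σ * τ) = invNum σ + 1 := invNum_mul_swap σ hadj hσlt
        rw [Pplus_diag_lt n r s _ _ hlt, Pplus_off_lt n r s _ _ hlt, hfσ, hg2σ,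
          epsVec_perm, epsVec_perm, hinv, pow_succ]
        have hp : ((-r : ℂ)) ^ invNum σ ≠ 0 := pow_ne_zero _ hnr
        field_simp
        ring
      · have hσgt : σ k1 < σ k' := hgt
        have hinv : invNum σ = invNum (σ * τ) + 1 := invNum_mul_swap' σ hadj hσgt
        rw [Pplus_diag_gt n r s _ _ hgt, Pplus_off_gt n r s _ _ hgt, hfσ, hg2σ,
          epsVec_perm, epsVec_perm, hinv, pow_succ]
        have hp : ((-r : ℂ)) ^ invNum (σ * τ) ≠ 0 := pow_ne_zero _ hnr
        field_simp
        ring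
    · have hinj2 : ¬ Function.Injective g2 := by
        intro h
        apply hinj
        have hcomp : g2 ∘ ⇑τ = f := by
          funext p
          simp only [Function.comp_apply, hg2, hτdef, Equiv.swap_apply_self]
        exact hcomp ▸ h.comp τ.injective
      rw [epsVec_not_inj n r s f hinj, epsVec_not_inj n r s g2 hinj2, mul_zero, mul_zero,
        add_zero]
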